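/- If τc i > 0 for all i, then the direct-ROI loss L is a convex function on ℝ^N, i.e., ConvexOn ℝ Set.univ L where L : (Fin N → ℝ) → ℝ. -/

import Mathlib

/-- The sigmoid function. -/
noncomputable def sigm (t : ℝ) : ℝ := 1 / (1 + Real.exp (-t))

lemma one_sub_sigm (t : ℝ) : 1 - sigm t = 1 / (1 + Real.exp t) := by
  have h1 : (0:ℝ) < 1 + Real.exp (-t) := by positivity
  have h2 : (0:ℝ) < 1 + Real.exp t := by positivity
  unfold sigm
  rw [Real.exp_neg]
  have h3 : Real.exp t ≠ 0 := (Real.exp_pos t).ne'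
  field_simp
  ring

lemma sigm_ratio (t : ℝ) : sigm t / (1 - sigm t) = Real.exp t := by
  rw [one_sub_sigm]
  unfold sigm
  rw [Real.exp_neg]
  have h3 : Real.exp t ≠ 0 := (Real.exp_pos t).ne'
  have h2 : (0:ℝ) < 1 + Real.exp t := by positivity
  field_simp
  ring

lemma convexOn_log_one_add_exp : ConvexOn ℝ Set.univ (fun x : ℝ => Real.log (1 + Real.exp x)) := by
  have hpos : ∀ x : ℝ, (0:ℝ) < 1 + Real.exp x := fun x => by positivity
  have hd : ∀ x : ℝ, HasDerivAt (fun x : ℝ => Real.log (1 + Real.exp x))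
      (Real.exp x / (1 + Real.exp x)) x := by
    intro x
    have h1 : HasDerivAt (fun x : ℝ => 1 + Real.exp x) (Real.exp x) x :=
      (Real.hasDerivAt_exp x).const_add 1
    simpa using h1.log (hpos x).ne'
  have hderiv : deriv (fun x : ℝ => Real.log (1 + Real.exp x))
      = fun x => Real.exp x / (1 + Real.exp x) := funext fun x => (hd x).deriv
  apply convexOn_univ_of_deriv2_nonneg
  · exact fun x => (hd x).differentiableAt
  · rw [hderiv]
    intro x
    exact ((Real.differentiable_exp x).div ((differentiable_const _).add Real.differentiable_exp x) (hpos x).ne')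
  · intro x
    rw [Function.iterate_succ, Function.iterate_one, Function.comp_apply, hderiv]
    have hd2 : HasDerivAt (fun x => Real.exp x / (1 + Real.exp x))
        ((Real.exp x * (1 + Real.exp x) - Real.exp x * Real.exp x) / (1 + Real.exp x)^2) x := by
      exact (Real.hasDerivAt_exp x).div ((Real.hasDerivAt_exp x).const_add 1) (hpos x).ne'
    rw [hd2.deriv]
    have he : Real.exp x * (1 + Real.exp x) - Real.exp x * Real.exp x = Real.exp x := by ring
    rw [he]
    positivity

lemma convexOn_sum' {ι : Type*} {E : Type*} [AddCommGroup E] [Module ℝ E]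
    (t : Finset ι) (g : ι → E → ℝ) (h : ∀ i ∈ t, ConvexOn ℝ Set.univ (g i)) :
    ConvexOn ℝ Set.univ (fun u => ∑ i ∈ t, g i u) := by
  classical
  induction t using Finset.induction with
  | empty => simpa using convexOn_const (0:ℝ) convex_univ
  | @insert a s hx ih =>
    simp only [Finset.sum_insert hx]
    exact (h a (Finset.mem_insert_self a s)).add
      (ih fun i hi => h i (Finset.mem_insert_of_mem hi))

/-- if all incremental costs are positive, the direct-ROI loss is
convex on ℝ^N. -/
theorem direct_roi_loss_convex
    (N : ℕ) (hN : 0 < N) (τr τc : Fin N → ℝ)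
    (L : (Fin N → ℝ) → ℝ)
    (hL : L = fun u : Fin N → ℝ => -(1 / (N : ℝ)) *
      ∑ i, (τr i * Real.log (sigm (u i) / (1 - sigm (u i)))
        + τc i * Real.log (1 - sigm (u i))))
    (hτc : ∀ i, 0 < τc i) :
    ConvexOn ℝ Set.univ L := by
  have hL' : L = fun u : Fin N → ℝ =>
      ∑ i, (1 / (N : ℝ)) * (τc i * Real.log (1 + Real.exp (u i)) - τr i * u i) := by
    rw [hL]
    funext u
    rw [Finset.mul_sum]
    refine Finset.sum_congr rfl fun i _ => ?_
    have hpos : (0:ℝ) < 1 + Real.exp (u i) := by positivity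
    rw [sigm_ratio, one_sub_sigm, Real.log_exp, Real.log_div one_ne_zero hpos.ne', Real.log_one]
    ring
  rw [hL']
  apply convexOn_sum'
  intro i _
  have h1 : ConvexOn ℝ Set.univ (fun u : Fin N → ℝ => Real.log (1 + Real.exp (u i))) := by
    have := convexOn_log_one_add_exp.comp_affineMap
      ((LinearMap.proj i : (Fin N → ℝ) →ₗ[ℝ] ℝ).toAffineMap)
    simpa [Function.comp_def] using this
  have h2 : ConvexOn ℝ Set.univ (fun u : Fin N → ℝ => τc i * Real.log (1 + Real.exp (u i))) := by
    simpa [smul_eq_mul] using h1.smul (le_of_lt (hτc i))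
  have h3 : ConvexOn ℝ Set.univ (fun u : Fin N → ℝ => - (τr i) * u i) := by
    exact ((- τr i • LinearMap.proj i : (Fin N → ℝ) →ₗ[ℝ] ℝ)).convexOn convex_univ
  have h4 := h2.add h3
  have h5 : ConvexOn ℝ Set.univ
      (fun u : Fin N → ℝ => τc i * Real.log (1 + Real.exp (u i)) - τr i * u i) := by
    convert h4 using 1
    · rfl
    funext u
    simp [Pi.add_apply]
    ring
  simpa [smul_eq_mul] using h5.smul (by positivity : (0:ℝ) ≤ 1 / (N:ℝ))
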